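/- arXiv:0802.3442 — 3 statements merged into one kernel-verified Lean document; each statement's English description precedes it below -/
import Mathlib

section
/- Let d ≥ 1 and let L ⊆ ℂ^d × ℂ^d be the set of pairs (F, F') with P F = 0, Q F' = 0, and C F' = Λ C F, where P, Q are orthogonal projections on ℂ^d with P Q = 0, C = I − P − Q, and Λ is a self-adjoint operator on the range of C. Then L is a subspace of dimension d, and the form ⟨F', G⟩ − ⟨F, G'⟩ vanishes for all (F,F'), (G,G') in L. -/
open Matrix

/-- Form (C) of self-adjoint vertex conditions: the set of (F, F') with P F = 0, Q F' = 0,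
C F' = Λ C F (C = I − P − Q) is a Lagrangian subspace of ℂ^d × ℂ^d of dimension d. -/
theorem stmt_3 (d : ℕ) (hd : 1 ≤ d) (P Q Λ : Matrix (Fin d) (Fin d) ℂ)
    (hP : P.IsHermitian) (hPP : P * P = P)
    (hQ : Q.IsHermitian) (hQQ : Q * Q = Q)
    (hPQ : P * Q = 0)
    (hΛ : Λ.IsHermitian)
    (hΛC : Λ * (1 - P - Q) = Λ) (hCΛ : (1 - P - Q) * Λ = Λ) :
    ∃ S : Submodule ℂ ((Fin d → ℂ) × (Fin d → ℂ)),
      (↑S : Set ((Fin d → ℂ) × (Fin d → ℂ)))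
          = {p | P.mulVec p.1 = 0 ∧ Q.mulVec p.2 = 0 ∧
              (1 - P - Q).mulVec p.2 = Λ.mulVec ((1 - P - Q).mulVec p.1)} ∧
        Module.finrank ℂ S = d ∧
        ∀ p ∈ S, ∀ q ∈ S,
          dotProduct (star (Prod.snd p)) (Prod.fst q)
            = dotProduct (star (Prod.fst p)) (Prod.snd q) := by
  have hQP : Q * P = 0 := by
    have := congrArg Matrix.conjTranspose hPQ
    simpa [Matrix.conjTranspose_mul, hP.eq, hQ.eq] using this
  have hCP : (1 - P - Q) * P = 0 := by
    simp [sub_mul, hPP, hQP]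
  have hPC : P * (1 - P - Q) = 0 := by
    simp [mul_sub, hPP, hPQ]
  have hCQ : (1 - P - Q) * Q = 0 := by
    simp [sub_mul, hQQ, hPQ]
  have hQC : Q * (1 - P - Q) = 0 := by
    simp [mul_sub, hQQ, hQP]
  have hΛP : Λ * P = 0 := by
    rw [← hΛC, mul_assoc, hCP, mul_zero]
  have hPΛ : P * Λ = 0 := by
    rw [← hCΛ, ← mul_assoc, hPC, zero_mul]
  have hΛQ : Λ * Q = 0 := by
    rw [← hΛC, mul_assoc, hCQ, mul_zero]
  have hQΛ : Q * Λ = 0 := by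
    rw [← hCΛ, ← mul_assoc, hQC, zero_mul]
  set ψ : (Fin d → ℂ) →ₗ[ℂ] ((Fin d → ℂ) × (Fin d → ℂ)) :=
    LinearMap.prod (Matrix.mulVecLin (1 - P)) (Matrix.mulVecLin (P + Λ)) with hψ
  refine ⟨LinearMap.range ψ, ?_, ?_, ?_⟩
  · ext ⟨F, F'⟩
    simp only [SetLike.mem_coe, LinearMap.mem_range, Set.mem_setOf_eq]
    constructor
    · rintro ⟨x, hx⟩
      obtain ⟨h1, h2⟩ := Prod.mk.injEq .. ▸ hx
      simp only [hψ, LinearMap.prod_apply, LinearMap.coe_mk, Pi.prod, mulVecLin_apply] at hx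
      have h1 : (1 - P).mulVec x = F := congrArg Prod.fst hx
      have h2 : (P + Λ).mulVec x = F' := congrArg Prod.snd hx
      subst h1 h2
      refine ⟨?_, ?_, ?_⟩
      · rw [Matrix.mulVec_mulVec]
        have : P * (1 - P) = 0 := by simp [mul_sub, hPP]
        simp [this]
      · rw [Matrix.mulVec_mulVec]
        have : Q * (P + Λ) = 0 := by simp [mul_add, hQP, hQΛ]
        simp [this]
      · have l : (1 - P - Q) * (P + Λ) = Λ := by
          rw [mul_add, hCP, hCΛ, zero_add]
        have r : Λ * (1 - P - Q) * (1 - P) = Λ := by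
          rw [hΛC, mul_sub, hΛP, mul_one, sub_zero]
        rw [Matrix.mulVec_mulVec, Matrix.mulVec_mulVec, Matrix.mulVec_mulVec, l, r]
    · rintro ⟨h1, h2, h3⟩
      refine ⟨F + P.mulVec F', ?_⟩
      have key : Λ.mulVec F + P.mulVec F' = F' := by
        have hsum : (P + Q + (1 - P - Q)) = (1 : Matrix (Fin d) (Fin d) ℂ) := by abel
        have := congrArg (fun M => Matrix.mulVec M F') hsum
        simp only [Matrix.add_mulVec, Matrix.one_mulVec, h2, add_zero] at this
        rw [h3, Matrix.mulVec_mulVec, hΛC] at this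
        linear_combination (norm := module) this
      simp only [hψ, LinearMap.prod_apply, Function.prod, mulVecLin_apply, Prod.mk.injEq]
      constructor
      · rw [Matrix.mulVec_add, Matrix.mulVec_mulVec]
        have : (1 - P) * P = 0 := by simp [sub_mul, hPP]
        simp [this, Matrix.sub_mulVec, h1]
      · have e : (P + Λ) * P = P := by rw [add_mul, hPP, hΛP, add_zero]
        rw [Matrix.mulVec_add, Matrix.mulVec_mulVec, e, Matrix.add_mulVec, h1, zero_add]
        exact key
  · have hinj : Function.Injective ψ := by
      rw [← LinearMap.ker_eq_bot]
      ext x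
      simp only [LinearMap.mem_ker, Submodule.mem_bot, hψ, LinearMap.prod_apply, Function.prod,
        mulVecLin_apply, Prod.mk_eq_zero]
      refine ⟨fun hx12 => ?_, fun h => by subst h; simp⟩
      obtain ⟨hx1, hx2⟩ := hx12
      have hx1' : x = P.mulVec x := by
        rw [Matrix.sub_mulVec, Matrix.one_mulVec, sub_eq_zero] at hx1
        exact hx1
      have hΛx : Λ.mulVec x = 0 := by
        rw [hx1', Matrix.mulVec_mulVec, hΛP, Matrix.zero_mulVec]
      rw [Matrix.add_mulVec, hΛx, add_zero] at hx2
      rw [hx1', hx2]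
    rw [LinearMap.finrank_range_of_inj hinj]
    simp
  · rintro p ⟨x, rfl⟩ q ⟨y, rfl⟩
    simp only [hψ, LinearMap.prod_apply, Function.prod, mulVecLin_apply]
    have key : ∀ (M N : Matrix (Fin d) (Fin d) ℂ) (v w : Fin d → ℂ),
        dotProduct (star (M.mulVec v)) (N.mulVec w)
          = dotProduct (star v) ((Mᴴ * N).mulVec w) := by
      intro M N v w
      rw [Matrix.star_mulVec, ← Matrix.dotProduct_mulVec, Matrix.mulVec_mulVec]
    rw [key, key]
    have hMH1 : (P + Λ)ᴴ = P + Λ := by rw [Matrix.conjTranspose_add, hP.eq, hΛ.eq]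
    have hMH2 : (1 - P)ᴴ = 1 - P := by
      rw [Matrix.conjTranspose_sub, hP.eq, Matrix.conjTranspose_one]
    rw [hMH1, hMH2]
    have e1 : (P + Λ) * (1 - P) = Λ := by
      rw [add_mul, mul_sub, mul_sub, hPP, hΛP, mul_one, mul_one, sub_self, zero_add, sub_zero]
    have e2 : (1 - P) * (P + Λ) = Λ := by
      rw [sub_mul, one_mul, mul_add, hPP, hPΛ, add_zero, add_sub_cancel_left]
    rw [e1, e2]
end

section
/- Let λ > 0 with sin(√λ l) ≠ 0 for the common edge length l. Suppose f solves −f'' = λ f on every edge of a finite metric graph with all edge lengths equal to l, f is continuous at vertices, and satisfies the Kirchhoff condition at every vertex. Then the vertex values F(v) = f(v) satisfy the difference equation Σ_{w ~ v} F(w) = d_v cos(√λ l) F(v) at each vertex v, where the sum is over neighbors w counted with edge multiplicity and d_v is the degree of v. -/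
private lemma wron_aux {l lam : ℝ} (hl : 0 ≤ l) (g : ℝ → ℂ)
    (hg : ContDiff ℝ 2 g)
    (hode : ∀ x ∈ Set.Icc (0:ℝ) l, deriv (deriv g) x = -(lam : ℂ) * g x)
    (s ds : ℝ → ℝ) (hsd : ∀ x, HasDerivAt s (ds x) x)
    (hdsd : ∀ x, HasDerivAt ds (-lam * s x) x) :
    g l * (ds l : ℂ) - deriv g l * (s l : ℂ)
      = g 0 * (ds 0 : ℂ) - deriv g 0 * (s 0 : ℂ) := by
  have hg1 : ContDiff ℝ 1 (deriv g) := by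
    have h2 : ContDiff ℝ (1 + 1 : ℕ) g := by exact_mod_cast hg
    exact (contDiff_succ_iff_deriv.mp (by exact_mod_cast h2)).2.2
  have hgd : Differentiable ℝ g := hg.differentiable (by norm_num)
  have hgd' : Differentiable ℝ (deriv g) := hg1.differentiable (by norm_num)
  set W : ℝ → ℂ := fun x => g x * (ds x : ℂ) - deriv g x * (s x : ℂ) with hW
  have hsdiff : Differentiable ℝ s := fun x => (hsd x).differentiableAt
  have hdsdiff : Differentiable ℝ ds := fun x => (hdsd x).differentiableAt
  have hscont : Continuous s := hsdiff.continuous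
  have hdscont : Continuous ds := hdsdiff.continuous
  have hWcont : ContinuousOn W (Set.Icc 0 l) := by
    apply Continuous.continuousOn
    exact (hgd.continuous.mul (Complex.continuous_ofReal.comp hdscont)).sub
      (hg1.continuous.mul (Complex.continuous_ofReal.comp hscont))
  have hWderiv : ∀ x ∈ Set.Ico (0:ℝ) l, HasDerivWithinAt W 0 (Set.Ici x) x := by
    intro x hx
    have h1 : HasDerivAt (fun y => g y * (ds y : ℂ))
        (deriv g x * (ds x : ℂ) + g x * ((-lam * s x : ℝ) : ℂ)) x :=
      ((hgd x).hasDerivAt).mul ((hdsd x).ofReal_comp)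
    have h2 : HasDerivAt (fun y => deriv g y * (s y : ℂ))
        (deriv (deriv g) x * (s x : ℂ) + deriv g x * ((ds x : ℝ) : ℂ)) x :=
      ((hgd' x).hasDerivAt).mul ((hsd x).ofReal_comp)
    have hW' : HasDerivAt W
        ((deriv g x * (ds x : ℂ) + g x * ((-lam * s x : ℝ) : ℂ))
          - (deriv (deriv g) x * (s x : ℂ) + deriv g x * ((ds x : ℝ) : ℂ))) x := h1.sub h2
    have hxIcc : x ∈ Set.Icc (0:ℝ) l := ⟨hx.1, hx.2.le⟩
    rw [hode x hxIcc] at hW'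
    have : (deriv g x * (ds x : ℂ) + g x * ((-lam * s x : ℝ) : ℂ))
          - ((-(lam:ℂ) * g x) * (s x : ℂ) + deriv g x * ((ds x : ℝ) : ℂ)) = 0 := by
      push_cast; ring
    rw [this] at hW'
    exact hW'.hasDerivWithinAt
  have := constant_of_has_deriv_right_zero hWcont hWderiv l (Set.right_mem_Icc.2 hl)
  simpa [hW] using this

private lemma deriv_zero_formula {l lam : ℝ} (hl : 0 ≤ l) (hlam : 0 < lam) (g : ℝ → ℂ)
    (hg : ContDiff ℝ 2 g)
    (hode : ∀ x ∈ Set.Icc (0:ℝ) l, deriv (deriv g) x = -(lam : ℂ) * g x) :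
    (Real.sin (Real.sqrt lam * l) : ℂ) * deriv g 0
      = (Real.sqrt lam : ℂ) * (g l - (Real.cos (Real.sqrt lam * l) : ℂ) * g 0) := by
  set ω := Real.sqrt lam with hω
  have hω2 : ω ^ 2 = lam := Real.sq_sqrt hlam.le
  have key := wron_aux hl g hg hode (fun x => Real.sin (ω * (l - x)))
      (fun x => -(ω * Real.cos (ω * (l - x))))
      (fun x => by
        have hi : HasDerivAt (fun x : ℝ => ω * (l - x)) (-ω) x := by
          simpa using (((hasDerivAt_id x).const_sub l).const_mul ω)
        have := (Real.hasDerivAt_sin (ω * (l - x))).comp x hi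
        exact this.congr_deriv (by ring))
      (fun x => by
        have hi : HasDerivAt (fun x : ℝ => ω * (l - x)) (-ω) x := by
          simpa using (((hasDerivAt_id x).const_sub l).const_mul ω)
        have := ((Real.hasDerivAt_cos (ω * (l - x))).comp x hi).const_mul ω
        have h2 := this.neg
        refine h2.congr_deriv (Eq.symm ?_)
        have hωω : ω * ω = lam := by nlinarith [hω2]
        linear_combination Real.sin (ω * (l - x)) * hωω)
  simp only [sub_self, mul_zero, Real.sin_zero, Real.cos_zero, mul_one, sub_zero,
    Complex.ofReal_zero, mul_zero] at key
  -- key : g l * (-(ω)) - deriv g l * 0 = g 0 * (-(ω cos(ωl))) - deriv g 0 * sin(ωl)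
  push_cast at key ⊢
  linear_combination key

private lemma deriv_l_formula {l lam : ℝ} (hl : 0 ≤ l) (hlam : 0 < lam) (g : ℝ → ℂ)
    (hg : ContDiff ℝ 2 g)
    (hode : ∀ x ∈ Set.Icc (0:ℝ) l, deriv (deriv g) x = -(lam : ℂ) * g x) :
    (Real.sin (Real.sqrt lam * l) : ℂ) * deriv g l
      = (Real.sqrt lam : ℂ) * ((Real.cos (Real.sqrt lam * l) : ℂ) * g l - g 0) := by
  set ω := Real.sqrt lam with hω
  have hω2 : ω ^ 2 = lam := Real.sq_sqrt hlam.le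
  have key := wron_aux hl g hg hode (fun x => Real.sin (ω * x))
      (fun x => ω * Real.cos (ω * x))
      (fun x => by
        have hi : HasDerivAt (fun x : ℝ => ω * x) ω x := by
          simpa using (hasDerivAt_id x).const_mul ω
        have := (Real.hasDerivAt_sin (ω * x)).comp x hi
        exact this.congr_deriv (by ring))
      (fun x => by
        have hi : HasDerivAt (fun x : ℝ => ω * x) ω x := by
          simpa using (hasDerivAt_id x).const_mul ω
        have := ((Real.hasDerivAt_cos (ω * x)).comp x hi).const_mul ω
        refine this.congr_deriv (Eq.symm ?_)
        have hωω : ω * ω = lam := by nlinarith [hω2]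
        linear_combination Real.sin (ω * x) * hωω)
  simp only [mul_zero, Real.sin_zero, Real.cos_zero, mul_one, Complex.ofReal_zero] at key
  push_cast at key ⊢
  linear_combination -key

/-- On an equilateral finite metric graph, solutions of −f'' = λf with continuity and
Kirchhoff conditions have vertex values satisfying Σ_{w ~ v} F(w) = d_v cos(√λ l) F(v). -/
theorem stmt_11 {V E : Type*} [Fintype V] [Fintype E] [DecidableEq V]
    (ends : E → V × V) (l lam : ℝ) (hl : 0 < l) (hlam : 0 < lam)
    (hs : Real.sin (Real.sqrt lam * l) ≠ 0)
    (f : E → ℝ → ℂ) (F : V → ℂ)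
    (hsm : ∀ e, ContDiff ℝ 2 (f e))
    (hode : ∀ e, ∀ x ∈ Set.Icc (0:ℝ) l, deriv (deriv (f e)) x = -(lam : ℂ) * f e x)
    (hv0 : ∀ e, f e 0 = F (ends e).1) (hvl : ∀ e, f e l = F (ends e).2)
    (hkir : ∀ v : V,
      (∑ e ∈ Finset.univ.filter (fun e => (ends e).1 = v), deriv (f e) 0)
        - (∑ e ∈ Finset.univ.filter (fun e => (ends e).2 = v), deriv (f e) l) = 0) :
    ∀ v : V,
      (∑ e ∈ Finset.univ.filter (fun e => (ends e).1 = v), F (ends e).2)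
        + (∑ e ∈ Finset.univ.filter (fun e => (ends e).2 = v), F (ends e).1)
      = ((((Finset.univ.filter (fun e => (ends e).1 = v)).card
            + (Finset.univ.filter (fun e => (ends e).2 = v)).card : ℕ) : ℂ))
          * ((Real.cos (Real.sqrt lam * l) : ℝ) : ℂ) * F v := by
  intro v
  classical
  set ω : ℝ := Real.sqrt lam with hωdef
  set sn : ℂ := (Real.sin (ω * l) : ℂ) with hsn
  set c : ℂ := (Real.cos (ω * l) : ℂ) with hc
  have hω0 : (ω : ℂ) ≠ 0 := by
    have : 0 < ω := Real.sqrt_pos.2 hlam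
    exact_mod_cast this.ne'
  set S1 := Finset.univ.filter (fun e => (ends e).1 = v) with hS1
  set S2 := Finset.univ.filter (fun e => (ends e).2 = v) with hS2
  have key0 : ∀ e, sn * deriv (f e) 0 = (ω : ℂ) * (F (ends e).2 - c * F (ends e).1) := by
    intro e
    have h := deriv_zero_formula hl.le hlam (f e) (hsm e) (hode e)
    rw [hv0 e, hvl e] at h
    exact h
  have keyl : ∀ e, sn * deriv (f e) l = (ω : ℂ) * (c * F (ends e).2 - F (ends e).1) := by
    intro e
    have h := deriv_l_formula hl.le hlam (f e) (hsm e) (hode e)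
    rw [hv0 e, hvl e] at h
    exact h
  have hk := hkir v
  have H : (∑ e ∈ S1, sn * deriv (f e) 0) - (∑ e ∈ S2, sn * deriv (f e) l) = 0 := by
    rw [← Finset.mul_sum, ← Finset.mul_sum, ← mul_sub, hk, mul_zero]
  have H1 : (∑ e ∈ S1, sn * deriv (f e) 0)
      = (ω : ℂ) * (∑ e ∈ S1, F (ends e).2) - (S1.card : ℂ) * ((ω : ℂ) * c * F v) := by
    rw [Finset.mul_sum]
    rw [show (S1.card : ℂ) * ((ω : ℂ) * c * F v) = ∑ _e ∈ S1, (ω : ℂ) * c * F v by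
      rw [Finset.sum_const, nsmul_eq_mul]]
    rw [← Finset.sum_sub_distrib]
    refine Finset.sum_congr rfl fun e he => ?_
    have hev : (ends e).1 = v := (Finset.mem_filter.1 he).2
    rw [key0 e, hev]; ring
  have H2 : (∑ e ∈ S2, sn * deriv (f e) l)
      = (S2.card : ℂ) * ((ω : ℂ) * c * F v) - (ω : ℂ) * (∑ e ∈ S2, F (ends e).1) := by
    rw [Finset.mul_sum]
    rw [show (S2.card : ℂ) * ((ω : ℂ) * c * F v) = ∑ _e ∈ S2, (ω : ℂ) * c * F v by
      rw [Finset.sum_const, nsmul_eq_mul]]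
    rw [← Finset.sum_sub_distrib]
    refine Finset.sum_congr rfl fun e he => ?_
    have hev : (ends e).2 = v := (Finset.mem_filter.1 he).2
    rw [keyl e, hev]; ring
  rw [H1, H2] at H
  have Hfactor : (ω : ℂ) * ((∑ e ∈ S1, F (ends e).2) + (∑ e ∈ S2, F (ends e).1)
      - ((S1.card + S2.card : ℕ) : ℂ) * c * F v) = 0 := by
    push_cast
    linear_combination H
  rcases mul_eq_zero.1 Hfactor with h | h
  · exact absurd h hω0
  · have := sub_eq_zero.1 h
    rw [this]
end

section
/- Conversely, let Γ be a finite metric graph with all edges of length l, let λ > 0 with sin(√λ l) ≠ 0, and suppose F : V → ℂ is a nonzero function on the vertices satisfying Σ_{w ~ v} F(w) = d_v cos(√λ l) F(v) at every vertex v. Define f on each edge e = (v, w) by f_e(x) = (1/sin(√λ l))(F(v) sin(√λ(l − x)) + F(w) sin(√λ x)). Then f is a nonzero eigenfunction of the Neumann–Kirchhoff quantum graph Hamiltonian with eigenvalue λ. -/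
lemma aux_sin' (a b : ℂ) (x : ℝ) :
    HasDerivAt (fun t : ℝ => Complex.sin (a + b * t)) (b * Complex.cos (a + b * x)) x := by
  have h1 : HasDerivAt (fun t : ℝ => ((t : ℂ))) 1 x := by
    simpa using (hasDerivAt_id x).ofReal_comp
  have hu : HasDerivAt (fun t : ℝ => a + b * (t : ℂ)) b x := by
    simpa using (h1.const_mul b).const_add a
  have hsin := (Complex.hasDerivAt_sin (a + b * x)).scomp x hu
  simpa [Function.comp_def, smul_eq_mul, mul_comm] using hsin

lemma aux_cos' (a b : ℂ) (x : ℝ) :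
    HasDerivAt (fun t : ℝ => Complex.cos (a + b * t)) (-(b * Complex.sin (a + b * x))) x := by
  have h1 : HasDerivAt (fun t : ℝ => ((t : ℂ))) 1 x := by
    simpa using (hasDerivAt_id x).ofReal_comp
  have hu : HasDerivAt (fun t : ℝ => a + b * (t : ℂ)) b x := by
    simpa using (h1.const_mul b).const_add a
  have hcos := (Complex.hasDerivAt_cos (a + b * x)).scomp x hu
  simpa [Function.comp_def, smul_eq_mul, mul_comm, mul_left_comm] using hcos

lemma key1d (c A B a b1 b2 : ℂ) (x : ℝ) :
    deriv (fun t : ℝ => c * (A * Complex.sin (a + b1 * t) + B * Complex.sin (0 + b2 * t))) x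
      = c * (A * (b1 * Complex.cos (a + b1 * x)) + B * (b2 * Complex.cos (0 + b2 * x))) :=
  ((((aux_sin' a b1 x).const_mul A).add ((aux_sin' 0 b2 x).const_mul B)).const_mul c).deriv

lemma key2d (c A B a b1 b2 : ℂ) (x : ℝ) :
    deriv (fun t : ℝ => c * (A * (b1 * Complex.cos (a + b1 * t)) + B * (b2 * Complex.cos (0 + b2 * t)))) x
      = c * (A * (b1 * -(b1 * Complex.sin (a + b1 * x))) + B * (b2 * -(b2 * Complex.sin (0 + b2 * x)))) := by
  have h := ((((aux_cos' a b1 x).const_mul b1).const_mul A).add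
    (((aux_cos' 0 b2 x).const_mul b2).const_mul B)).const_mul c
  have h2 := h.deriv
  rw [← h2]
  rfl

/-- Converse: a nonzero vertex function F satisfying the discrete equation
Σ_{w ~ v} F(w) = d_v cos(√λ l) F(v), extended along edges by the explicit sine formula,
gives a nonzero eigenfunction of the Neumann–Kirchhoff Hamiltonian with eigenvalue λ. -/
theorem stmt_12 {V E : Type*} [Fintype V] [Fintype E] [DecidableEq V]
    (ends : E → V × V) (hcover : ∀ v : V, ∃ e, (ends e).1 = v ∨ (ends e).2 = v)
    (l lam : ℝ) (hl : 0 < l) (hlam : 0 < lam)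
    (hs : Real.sin (Real.sqrt lam * l) ≠ 0)
    (F : V → ℂ) (hF : F ≠ 0)
    (hdisc : ∀ v : V,
      (∑ e ∈ Finset.univ.filter (fun e => (ends e).1 = v), F (ends e).2)
        + (∑ e ∈ Finset.univ.filter (fun e => (ends e).2 = v), F (ends e).1)
      = ((((Finset.univ.filter (fun e => (ends e).1 = v)).card
            + (Finset.univ.filter (fun e => (ends e).2 = v)).card : ℕ) : ℂ))
          * ((Real.cos (Real.sqrt lam * l) : ℝ) : ℂ) * F v)
    (f : E → ℝ → ℂ)
    (hf : ∀ e (x : ℝ), f e x = ((Real.sin (Real.sqrt lam * l) : ℝ) : ℂ)⁻¹ *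
      (F (ends e).1 * Complex.sin ((Real.sqrt lam * (l - x) : ℝ) : ℂ) +
       F (ends e).2 * Complex.sin ((Real.sqrt lam * x : ℝ) : ℂ))) :
    (∀ e, ∀ x ∈ Set.Icc (0:ℝ) l, deriv (deriv (f e)) x = -(lam : ℂ) * f e x) ∧
    (∀ e, f e 0 = F (ends e).1 ∧ f e l = F (ends e).2) ∧
    (∀ v : V,
      (∑ e ∈ Finset.univ.filter (fun e => (ends e).1 = v), deriv (f e) 0)
        - (∑ e ∈ Finset.univ.filter (fun e => (ends e).2 = v), deriv (f e) l) = 0) ∧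
    (∃ e, ∃ x ∈ Set.Icc (0:ℝ) l, f e x ≠ 0) := by
  set s : ℝ := Real.sqrt lam with hsdef
  set c : ℂ := ((Real.sin (s * l) : ℝ) : ℂ)⁻¹ with hcdef
  set a : ℂ := (s : ℂ) * (l : ℂ) with hadef
  have hs2 : (s : ℂ) * (s : ℂ) = (lam : ℂ) := by
    rw [← Complex.ofReal_mul, Real.mul_self_sqrt hlam.le]
  have hsC : ((Real.sin (s * l) : ℝ) : ℂ) ≠ 0 := Complex.ofReal_ne_zero.mpr hs
  -- rewrite f e as the canonical form
  have hfe : ∀ e, f e = fun x : ℝ =>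
      c * (F (ends e).1 * Complex.sin (a + (-(s:ℂ)) * x)
        + F (ends e).2 * Complex.sin (0 + (s:ℂ) * x)) := by
    intro e
    funext x
    rw [hf]
    congr 2
    · congr 1
      push_cast
      rw [hadef]
      ring
    · congr 1
      push_cast
      ring
  -- vertex values
  have hc1 : c * Complex.sin ((s:ℂ) * (l:ℝ)) = 1 := by
    rw [hcdef, ← Complex.ofReal_mul, ← Complex.ofReal_sin]
    exact inv_mul_cancel₀ hsC
  have hval : ∀ e, f e 0 = F (ends e).1 ∧ f e l = F (ends e).2 := by
    intro e
    have h0 : f e 0 = c * (F (ends e).1 * Complex.sin (a + (-(s:ℂ)) * ((0:ℝ):ℂ))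
        + F (ends e).2 * Complex.sin (0 + (s:ℂ) * ((0:ℝ):ℂ))) := by rw [hfe e]
    have h1 : f e l = c * (F (ends e).1 * Complex.sin (a + (-(s:ℂ)) * ((l:ℝ):ℂ))
        + F (ends e).2 * Complex.sin (0 + (s:ℂ) * ((l:ℝ):ℂ))) := by rw [hfe e]
    have ha0 : a + (-(s:ℂ)) * ((l:ℝ):ℂ) = 0 := by rw [hadef]; ring
    constructor
    · rw [h0]
      simp only [Complex.ofReal_zero, mul_zero, add_zero, Complex.sin_zero, zero_add]
      rw [hadef]
      linear_combination F (ends e).1 * hc1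
    · rw [h1, ha0]
      simp only [Complex.sin_zero, mul_zero, zero_add]
      linear_combination F (ends e).2 * hc1
  -- first derivative values
  have hd : ∀ e (x : ℝ), deriv (f e) x =
      c * (F (ends e).1 * ((-(s:ℂ)) * Complex.cos (a + (-(s:ℂ)) * x))
        + F (ends e).2 * ((s:ℂ) * Complex.cos (0 + (s:ℂ) * x))) := by
    intro e x
    rw [hfe e]
    exact key1d c _ _ a (-(s:ℂ)) (s:ℂ) x
  have hcosl : Complex.cos (((s:ℝ) : ℂ) * ((l:ℝ) : ℂ)) = ((Real.cos (s * l) : ℝ) : ℂ) := by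
    rw [← Complex.ofReal_mul, Complex.ofReal_cos]
  refine ⟨?_, hval, ?_, ?_⟩
  · -- eigenvalue equation
    intro e x _
    have hderiv_fun : deriv (f e) = fun x : ℝ =>
        c * (F (ends e).1 * ((-(s:ℂ)) * Complex.cos (a + (-(s:ℂ)) * x))
          + F (ends e).2 * ((s:ℂ) * Complex.cos (0 + (s:ℂ) * x))) := funext (hd e)
    rw [hderiv_fun, key2d c _ _ a (-(s:ℂ)) (s:ℂ) x, hfe e]
    have h1 := hs2
    linear_combination (-(c * (F (ends e).1 * Complex.sin (a + (-(s:ℂ)) * x)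
      + F (ends e).2 * Complex.sin (0 + (s:ℂ) * x)))) * hs2
  · -- Kirchhoff condition
    intro v
    set C : ℂ := ((Real.cos (s * l) : ℝ) : ℂ) with hCdef
    have hd0 : ∀ e, (ends e).1 = v → deriv (f e) 0 = c * (s:ℂ) * (F (ends e).2 - F v * C) := by
      intro e he
      rw [hd e 0]
      simp only [Complex.ofReal_zero, mul_zero, add_zero, zero_add, Complex.cos_zero]
      rw [hadef, hcosl, ← he, hCdef]
      ring
    have hdl : ∀ e, (ends e).2 = v → deriv (f e) l = c * (s:ℂ) * (F v * C - F (ends e).1) := by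
      intro e he
      rw [hd e l]
      have ha0 : a + (-(s:ℂ)) * (l:ℝ) = 0 := by rw [hadef]; ring
      rw [ha0]
      simp only [Complex.cos_zero, mul_one, zero_add]
      rw [show ((s:ℝ):ℂ) * ((l:ℝ):ℂ) = ((s * l : ℝ) : ℂ) by push_cast; ring] at *
      rw [← Complex.ofReal_cos, ← he, hCdef]
      ring
    rw [Finset.sum_congr rfl (fun e he => hd0 e (Finset.mem_filter.mp he).2),
      Finset.sum_congr rfl (fun e he => hdl e (Finset.mem_filter.mp he).2)]
    have hdv := hdisc v
    simp only [mul_sub, Finset.sum_sub_distrib, Finset.sum_const, nsmul_eq_mul,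
      ← Finset.mul_sum]
    push_cast at hdv ⊢
    linear_combination (c * (s:ℂ)) * hdv
  · -- nonzero
    obtain ⟨v, hv⟩ := Function.ne_iff.mp hF
    obtain ⟨e, he⟩ := hcover v
    rcases he with he | he
    · exact ⟨e, 0, ⟨le_refl _, hl.le⟩, by rw [(hval e).1, he]; exact hv⟩
    · exact ⟨e, l, ⟨hl.le, le_refl _⟩, by rw [(hval e).2, he]; exact hv⟩
end
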